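/- Let r : ℝ → ℝ be C², let f ∈ ℝ be a nonzero constant, and let x : ℝ → ℝ be differentiable with x'(t) = r(x(t)) for all t ∈ ℝ. Assume r(s) r''(s) + 2 r'(s)² = 2 f r'(s) for all s ∈ ℝ. Then there exist constants c, c' ∈ ℝ such that r(x(t))² = (c / f) · exp(2 f t) + c' for all t ∈ ℝ. (This is the constant-factor case of the paper's Remark 2 solution formula for a mixed Killing vector field r d/dx on the real line, evaluated along an integral curve.) -/

import Mathlib

open Real

/-- the constant-factor case of Remark 2: if `r` is C², `f` is a nonzero
constant, `x` is an integral curve of `r d/dx` and `r r'' + 2 r'² = 2 f r'` holds on ℝ,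
then `r(x(t))² = (c / f) exp(2 f t) + c'` for some constants `c, c'`. -/
theorem mixedKilling_solution_along_integral_curve_const (r x : ℝ → ℝ)
    (hr : ContDiff ℝ 2 r) (f : ℝ) (hf : f ≠ 0)
    (hx : Differentiable ℝ x) (hode : ∀ t, deriv x t = r (x t))
    (hmk : ∀ s, r s * deriv (deriv r) s + 2 * (deriv r s) ^ 2 = 2 * f * deriv r s) :
    ∃ c c' : ℝ, ∀ t, (r (x t)) ^ 2 = c / f * exp (2 * f * t) + c' := by
  have hrd : Differentiable ℝ r := hr.differentiable (by norm_num)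
  have hr1 : ContDiff ℝ 1 (deriv r) := by
    have := (contDiff_succ_iff_deriv (n := 1)).mp (by exact_mod_cast hr)
    exact this.2.2
  have hdrd : Differentiable ℝ (deriv r) := hr1.differentiable one_ne_zero
  -- integral curve derivative
  have hx' : ∀ t, HasDerivAt x (r (x t)) t := by
    intro t
    have := (hx t).hasDerivAt
    rwa [hode t] at this
  -- derivative of G' := fun t => 2 * r (x t)^2 * deriv r (x t)
  set G' : ℝ → ℝ := fun t => 2 * (r (x t)) ^ 2 * deriv r (x t) with hG'def
  have hG : ∀ t, HasDerivAt (fun t => (r (x t)) ^ 2) (G' t) t := by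
    intro t
    have hu : HasDerivAt (fun t => r (x t)) (deriv r (x t) * r (x t)) t :=
      (hrd (x t)).hasDerivAt.comp t (hx' t)
    have := hu.pow 2
    refine this.congr_deriv ?_
    simp [hG'def]; ring
  have hG' : ∀ t, HasDerivAt G' (2 * f * G' t) t := by
    intro t
    have hφ : HasDerivAt (fun s => 2 * (r s) ^ 2 * deriv r s)
        ((2 * (2 * r (x t) * deriv r (x t))) * deriv r (x t) +
          2 * (r (x t)) ^ 2 * deriv (deriv r) (x t)) (x t) := by
      have h1 : HasDerivAt (fun s => 2 * (r s) ^ 2)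
          (2 * (2 * r (x t) * deriv r (x t))) (x t) := by
        have := ((hrd (x t)).hasDerivAt.pow 2).const_mul 2
        refine this.congr_deriv ?_; ring
      exact h1.mul (hdrd (x t)).hasDerivAt
    have := hφ.comp t (hx' t)
    refine this.congr_deriv ?_
    have h := hmk (x t)
    simp only [hG'def]
    nlinarith [h]
  -- H := G' * exp(-(2f)t) is constant
  have hH : ∀ t, HasDerivAt (fun t => G' t * exp (-(2 * f) * t)) 0 t := by
    intro t
    have he : HasDerivAt (fun t => exp (-(2 * f) * t)) (-(2 * f) * exp (-(2 * f) * t)) t := by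
      have := (hasDerivAt_id t).const_mul (-(2 * f))
      have := (Real.hasDerivAt_exp (-(2 * f) * t)).comp t this
      refine this.congr_deriv ?_; ring
    have := (hG' t).mul he
    refine this.congr_deriv ?_
    ring
  have hconst : ∀ t, G' t * exp (-(2 * f) * t) = G' 0 * exp (-(2 * f) * 0) := by
    intro t
    exact is_const_of_deriv_eq_zero (fun s => (hH s).differentiableAt)
      (fun s => (hH s).deriv) t 0
  set A : ℝ := G' 0 with hA
  have hG'eq : ∀ t, G' t = A * exp (2 * f * t) := by
    intro t
    have h := hconst t
    rw [neg_mul, Real.exp_neg] at h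
    field_simp at h ⊢
    simpa using h
  -- K := G - A/(2f) exp(2ft) is constant
  have hK : ∀ t, HasDerivAt (fun t => (r (x t)) ^ 2 - A / (2 * f) * exp (2 * f * t)) 0 t := by
    intro t
    have he : HasDerivAt (fun t => exp (2 * f * t)) (2 * f * exp (2 * f * t)) t := by
      have := (hasDerivAt_id t).const_mul (2 * f)
      have := (Real.hasDerivAt_exp (2 * f * t)).comp t this
      refine this.congr_deriv ?_; ring
    have := (hG t).sub (he.const_mul (A / (2 * f)))
    refine this.congr_deriv ?_
    rw [hG'eq t]
    field_simp
    ring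
  refine ⟨A / 2, (r (x 0)) ^ 2 - A / (2 * f) * exp (2 * f * 0), fun t => ?_⟩
  have h := is_const_of_deriv_eq_zero (fun s => (hK s).differentiableAt)
    (fun s => (hK s).deriv) t 0
  have hdiv : A / 2 / f = A / (2 * f) := by field_simp
  rw [hdiv]
  linarith [h]
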